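/- Let 1 ≤ t ≤ |F| with t ≥ |F|/3, and let I be an instance of the setwise-disjoint facility location problem with at least one t-good customer. With X and Y the two greedy hitting sets generated by one run of DHS_t as above, one has |X| ≤ 1 + 2.47·ln|C_t| and |X ∪ Y| ≤ (3.47·ln|C_t| + 2)·OPT_t(I), where OPT_t(I) ≥ 1 is the minimum size of a setwise-disjoint cover of the set C_t of t-good customers. -/

import Mathlib

/-- `IsDiPath A a b p` asserts that the list of vertices `p` is a simple directed
path from `a` to `b` in the directed graph with arc relation `A`. -/
def IsDiPath {V : Type*} (A : V → V → Prop) (a b : V) (p : List V) : Prop :=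
  p.head? = some a ∧ p.getLast? = some b ∧ List.Chain' A p ∧ p.Nodup

/-- The arcs traversed by a path: the list of consecutive pairs of vertices. -/
def pathArcs {V : Type*} (p : List V) : List (V × V) :=
  p.zip p.tail

/-- The total weight of a path: the sum of the weights of its arcs. -/
def pathWeight {V : Type*} (w : V → V → ℝ) (p : List V) : ℝ :=
  ((p.zip p.tail).map fun e => w e.1 e.2).sum

/-- `p` is a shortest (minimum total weight) directed path from `a` to `b`. -/
def IsShortestDiPath {V : Type*} (A : V → V → Prop) (w : V → V → ℝ) (a b : V)
    (p : List V) : Prop :=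
  IsDiPath A a b p ∧ ∀ q, IsDiPath A a b q → pathWeight w p ≤ pathWeight w q

/-- The pair `{f₁, f₂}` covers `c` in a pathwise-disjoint fashion: there are shortest
paths from `c` to `f₁` and from `c` to `f₂` with no common vertex except `c`. -/
def CoversPathwise {V : Type*} (A : V → V → Prop) (w : V → V → ℝ) (c f₁ f₂ : V) : Prop :=
  ∃ p₁ p₂, IsShortestDiPath A w c f₁ p₁ ∧ IsShortestDiPath A w c f₂ p₂ ∧
    ∀ v ∈ p₁, v ∈ p₂ → v = c

/-- The pair `{f₁, f₂}` covers `c` in a setwise-disjoint fashion: no shortest path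
from `c` to `f₁` shares a vertex other than `c` with any shortest path from `c` to `f₂`. -/
def CoversSetwise {V : Type*} (A : V → V → Prop) (w : V → V → ℝ) (c f₁ f₂ : V) : Prop :=
  ∀ p₁ p₂, IsShortestDiPath A w c f₁ p₁ → IsShortestDiPath A w c f₂ p₂ →
    ∀ v ∈ p₁, v ∈ p₂ → v = c

/-- `F'` is a pathwise-disjoint cover for the customers `C` (facilities drawn from `F`). -/
def IsPathwiseCover {V : Type*} (A : V → V → Prop) (w : V → V → ℝ) (C F F' : Set V) : Prop :=
  F' ⊆ F ∧ ∀ c ∈ C, c ∉ F' → ∃ f₁ ∈ F', ∃ f₂ ∈ F', f₁ ≠ f₂ ∧ f₁ ≠ c ∧ f₂ ≠ c ∧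
    CoversPathwise A w c f₁ f₂

/-- `F'` is a setwise-disjoint cover for the customers `C` (facilities drawn from `F`). -/
def IsSetwiseCover {V : Type*} (A : V → V → Prop) (w : V → V → ℝ) (C F F' : Set V) : Prop :=
  F' ⊆ F ∧ ∀ c ∈ C, c ∉ F' → ∃ f₁ ∈ F', ∃ f₂ ∈ F', f₁ ≠ f₂ ∧ f₁ ≠ c ∧ f₂ ≠ c ∧
    CoversSetwise A w c f₁ f₂

/-- `spNbrs A w c f` : the set `N(c,f)` of out-neighbours `x` of `c` that lie on
some shortest path from `c` to `f`. -/
def spNbrs {V : Type*} (A : V → V → Prop) (w : V → V → ℝ) (c f : V) : Set V :=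
  {x | A c x ∧ ∃ p, IsShortestDiPath A w c f p ∧ x ∈ p}

/-- A facility `f` is *good* for a customer `c` if `f ≠ c` and `|N(c,f)| = 1`,
i.e. all shortest paths from `c` to `f` leave `c` via the same arc. -/
def GoodFor {V : Type*} (A : V → V → Prop) (w : V → V → ℝ) (F : Set V) (c f : V) : Prop :=
  f ∈ F ∧ f ≠ c ∧ (spNbrs A w c f).ncard = 1

/-- `C_t` : the set of `t`-good customers, i.e. customers with at least `t` good facilities. -/
def tGoodCustomers {V : Type*} (A : V → V → Prop) (w : V → V → ℝ) (C F : Set V) (t : ℕ) :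
    Set V :=
  {c ∈ C | t ≤ {f | GoodFor A w F c f}.ncard}

/-- `S_c` : the customer `c` together with all good facilities for `c`. -/
def Sgood {V : Type*} (A : V → V → Prop) (w : V → V → ℝ) (F : Set V) (c : V) : Set V :=
  {c} ∪ {f | GoodFor A w F c f}

/-- The customer `c` is covered by the set `X`: either `c ∈ X`, or some pair of
distinct facilities in `X - {c}` covers `c` in a setwise-disjoint fashion. -/
def CoveredBy {V : Type*} (A : V → V → Prop) (w : V → V → ℝ) (X : Set V) (c : V) : Prop :=
  c ∈ X ∨ ∃ f₁ ∈ X, ∃ f₂ ∈ X, f₁ ≠ f₂ ∧ f₁ ≠ c ∧ f₂ ≠ c ∧ CoversSetwise A w c f₁ f₂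

/-- `F_c` : the customer `c` together with all facilities `f ≠ c` all of whose
shortest paths from `c` avoid the vertex `x`. -/
def Favoid {V : Type*} (A : V → V → Prop) (w : V → V → ℝ) (F : Set V) (x c : V) : Set V :=
  {c} ∪ {f ∈ F | f ≠ c ∧ ∀ p, IsShortestDiPath A w c f p → x ∉ p}

/-- The members of the family (indexed by `I`) not yet hit by the set `X`. -/
def unhitSets {V ι : Type*} (Fam : ι → Set V) (I : Set ι) (X : Set V) : Set ι :=
  {i ∈ I | ∀ f ∈ X, f ∉ Fam i}

/-- `GreedyRun F Fam I l` : the list `l` (most recently chosen element first) is a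
run of the greedy hitting-set heuristic over ground set `F` on the family
`{Fam i : i ∈ I}`: each chosen element is picked, while some set is still unhit,
so as to hit a maximum number of as-yet-unhit sets. -/
def GreedyRun {V ι : Type*} (F : Set V) (Fam : ι → Set V) (I : Set ι) : List V → Prop
  | [] => True
  | f :: l =>
      GreedyRun F Fam I l ∧ f ∈ F ∧ (unhitSets Fam I {v | v ∈ l}).Nonempty ∧
        ∀ g ∈ F,
          {i ∈ unhitSets Fam I {v | v ∈ l} | g ∈ Fam i}.ncard ≤
          {i ∈ unhitSets Fam I {v | v ∈ l} | f ∈ Fam i}.ncard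

/-- `X` is a hitting set produced by the greedy hitting-set heuristic. -/
def IsGreedyHittingSet {V ι : Type*} (F : Set V) (Fam : ι → Set V) (I : Set ι)
    (X : Set V) : Prop :=
  ∃ l : List V, GreedyRun F Fam I l ∧ X = {v | v ∈ l} ∧ unhitSets Fam I X = ∅

lemma unhitSets_subset {V ι : Type*} (Fam : ι → Set V) (I : Set ι) (X : Set V) :
    unhitSets Fam I X ⊆ I := fun i hi => hi.1

lemma unhitSets_insert {V ι : Type*} (Fam : ι → Set V) (I : Set ι) (X : Set V) (f : V) :
    unhitSets Fam I (insert f X) = {i ∈ unhitSets Fam I X | f ∉ Fam i} := by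
  ext i
  simp only [unhitSets, Set.mem_setOf_eq, Set.mem_insert_iff]
  constructor
  · rintro ⟨hI, h⟩
    exact ⟨⟨hI, fun g hg => h g (Or.inr hg)⟩, h f (Or.inl rfl)⟩
  · rintro ⟨⟨hI, h⟩, hf⟩
    exact ⟨hI, fun g hg => hg.elim (fun e => e ▸ hf) (h g)⟩

lemma ncard_sep_eq_filter {ι : Type*} {U : Set ι} (hU : U.Finite) (p : ι → Prop)
    [DecidablePred p] :
    {i ∈ U | p i}.ncard = (hU.toFinset.filter p).card := by
  rw [← Set.ncard_coe_finset]
  congr 1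
  ext i
  simp [Set.Finite.mem_toFinset]

lemma ncard_mem_list_le {V : Type*} (l : List V) : {v | v ∈ l}.ncard ≤ l.length := by
  classical
  have h : {v | v ∈ l} = ↑l.toFinset := by ext x; simp
  rw [h, Set.ncard_coe_finset]
  exact List.toFinset_card_le l

lemma greedy_decay {V ι : Type*} (F : Set V) (Fam : ι → Set V) (I : Set ι)
    (hIfin : I.Finite) (ρ : ℝ) (hρ0 : 0 ≤ ρ)
    (hstep : ∀ U : Set ι, U ⊆ I → U.Nonempty →
      ∃ g ∈ F, (1 - ρ) * (U.ncard : ℝ) ≤ ({i ∈ U | g ∈ Fam i}.ncard : ℝ)) :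
    ∀ l : List V, GreedyRun F Fam I l →
      ((unhitSets Fam I {v | v ∈ l}).ncard : ℝ) ≤ ρ ^ l.length * I.ncard := by
  intro l
  induction l with
  | nil =>
    intro _
    simp only [List.length_nil, pow_zero, one_mul]
    have h := Set.ncard_le_ncard (unhitSets_subset Fam I {v | v ∈ ([] : List V)}) hIfin
    exact_mod_cast h
  | cons f l ih =>
    rintro ⟨hrun, hfF, hne, hmax⟩
    set U := unhitSets Fam I {v | v ∈ l} with hUdef
    have hUI : U ⊆ I := unhitSets_subset _ _ _
    have hUfin : U.Finite := hIfin.subset hUI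
    obtain ⟨g, hgF, hg⟩ := hstep U hUI hne
    have hgf : ({i ∈ U | g ∈ Fam i}.ncard : ℝ) ≤ ({i ∈ U | f ∈ Fam i}.ncard : ℝ) := by
      exact_mod_cast hmax g hgF
    have hset : {v | v ∈ f :: l} = insert f {v | v ∈ l} := by
      ext x; simp [List.mem_cons]
    have hnew : unhitSets Fam I {v | v ∈ f :: l} = {i ∈ U | f ∉ Fam i} := by
      rw [hset, unhitSets_insert]
    have hunion : {i ∈ U | f ∉ Fam i} ∪ {i ∈ U | f ∈ Fam i} = U := by
      ext i; by_cases h : f ∈ Fam i <;> simp [h]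
    have hdisj : Disjoint {i ∈ U | f ∉ Fam i} {i ∈ U | f ∈ Fam i} := by
      rw [Set.disjoint_left]
      rintro i ⟨_, h⟩ ⟨_, h'⟩
      exact h h'
    have hsplit : U.ncard = {i ∈ U | f ∉ Fam i}.ncard + {i ∈ U | f ∈ Fam i}.ncard := by
      rw [← Set.ncard_union_eq hdisj (hUfin.subset (Set.sep_subset _ _))
        (hUfin.subset (Set.sep_subset _ _)), hunion]
    have hsplitR : (U.ncard : ℝ)
        = ({i ∈ U | f ∉ Fam i}.ncard : ℝ) + ({i ∈ U | f ∈ Fam i}.ncard : ℝ) := by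
      exact_mod_cast congrArg (Nat.cast : ℕ → ℝ) hsplit
    have hUle : (U.ncard : ℝ) ≤ ρ ^ l.length * I.ncard := ih hrun
    have h1 : ((unhitSets Fam I {v | v ∈ f :: l}).ncard : ℝ) ≤ ρ * (U.ncard : ℝ) := by
      rw [hnew]
      linarith
    calc ((unhitSets Fam I {v | v ∈ f :: l}).ncard : ℝ)
        ≤ ρ * (U.ncard : ℝ) := h1
      _ ≤ ρ * (ρ ^ l.length * I.ncard) := by
          exact mul_le_mul_of_nonneg_left hUle hρ0
      _ = ρ ^ (f :: l).length * I.ncard := by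
          rw [List.length_cons, pow_succ]; ring

lemma greedy_card_bound {V ι : Type*} (F : Set V) (Fam : ι → Set V) (I : Set ι)
    (hIfin : I.Finite) (ρ c : ℝ) (hρ0 : 0 ≤ ρ) (hc : 0 < c) (hρc : ρ ≤ Real.exp (-c))
    (hstep : ∀ U : Set ι, U ⊆ I → U.Nonempty →
      ∃ g ∈ F, (1 - ρ) * (U.ncard : ℝ) ≤ ({i ∈ U | g ∈ Fam i}.ncard : ℝ))
    (X : Set V) (hX : IsGreedyHittingSet F Fam I X) :
    X = ∅ ∨ ((1:ℝ) ≤ I.ncard ∧ (X.ncard : ℝ) ≤ Real.log (I.ncard) / c + 1) := by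
  obtain ⟨l, hrun, hXl, -⟩ := hX
  match l, hrun, hXl with
  | [], _, hXl =>
    left
    rw [hXl]
    ext x; simp
  | f :: l', ⟨hrun', hf, hne, hmax⟩, hXl =>
    right
    have hU'fin : (unhitSets Fam I {v | v ∈ l'}).Finite :=
      hIfin.subset (unhitSets_subset _ _ _)
    have h1le : (1:ℝ) ≤ ((unhitSets Fam I {v | v ∈ l'}).ncard : ℝ) := by
      have := (Set.ncard_pos hU'fin).mpr hne
      exact_mod_cast this
    have hdecay := greedy_decay F Fam I hIfin ρ hρ0 hstep l' hrun'
    have hm1 : (1:ℝ) ≤ (I.ncard : ℝ) := by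
      have : (unhitSets Fam I {v | v ∈ l'}).ncard ≤ I.ncard :=
        Set.ncard_le_ncard (unhitSets_subset _ _ _) hIfin
      have h2 : (1:ℝ) ≤ (I.ncard:ℝ) := le_trans h1le (by exact_mod_cast this)
      exact h2
    have hmpos : (0:ℝ) < (I.ncard : ℝ) := lt_of_lt_of_le one_pos hm1
    set n := l'.length with hn
    have hbig : (1:ℝ) ≤ Real.exp (-(c * n)) * I.ncard := by
      have hexp : ρ ^ n ≤ Real.exp (-(c * n)) := by
        calc ρ ^ n ≤ Real.exp (-c) ^ n := pow_le_pow_left₀ hρ0 hρc n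
          _ = Real.exp (-(c * n)) := by
              rw [← Real.exp_nat_mul]; ring_nf
      have : ρ ^ n * (I.ncard:ℝ) ≤ Real.exp (-(c * n)) * I.ncard :=
        mul_le_mul_of_nonneg_right hexp hmpos.le
      linarith [le_trans h1le hdecay]
    have hexple : Real.exp (c * n) ≤ (I.ncard : ℝ) := by
      rw [Real.exp_neg] at hbig
      have h2 : Real.exp (c * n) * 1
          ≤ Real.exp (c * n) * ((Real.exp (c * n))⁻¹ * (I.ncard : ℝ)) :=
        mul_le_mul_of_nonneg_left hbig (Real.exp_pos _).le
      rw [mul_one, ← mul_assoc, mul_inv_cancel₀ (Real.exp_pos _).ne', one_mul] at h2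
      exact h2
    have hlog : c * n ≤ Real.log (I.ncard : ℝ) :=
      (Real.le_log_iff_exp_le hmpos).mpr hexple
    have hnle : (n : ℝ) ≤ Real.log (I.ncard : ℝ) / c := by
      rw [le_div_iff₀ hc]
      linarith
    have hXcard : (X.ncard : ℝ) ≤ (n : ℝ) + 1 := by
      have : X.ncard ≤ (f :: l').length := by
        rw [hXl]; exact ncard_mem_list_le _
      rw [List.length_cons] at this
      exact_mod_cast le_trans (Nat.cast_le.mpr this) (by push_cast; linarith)
    exact ⟨hm1, by linarith⟩

open Classical in

lemma exists_avg_elt {ι V : Type*} (F : Set V) (hF : F.Finite) (hFne : F.Nonempty)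
    (Fam : ι → Set V) (U : Set ι) (hU : U.Finite) (s : ℕ)
    (hsize : ∀ i ∈ U, s ≤ {f ∈ F | f ∈ Fam i}.ncard) :
    ∃ g ∈ F, (s : ℝ) * U.ncard / F.ncard ≤ ({i ∈ U | g ∈ Fam i}.ncard : ℝ) := by
  have hFpos : 0 < (F.ncard : ℝ) := by
    have := (Set.ncard_pos hF).mpr hFne
    exact_mod_cast this
  have hTne : hF.toFinset.Nonempty := by
    rwa [Set.Finite.toFinset_nonempty]
  have hswap : ∑ g ∈ hF.toFinset, ((hU.toFinset.filter (fun i => g ∈ Fam i)).card)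
      = ∑ i ∈ hU.toFinset, ((hF.toFinset.filter (fun g => g ∈ Fam i)).card) := by
    simp_rw [Finset.card_filter]
    exact Finset.sum_comm
  have hlow : (s : ℝ) * U.ncard
      ≤ ∑ g ∈ hF.toFinset, (((hU.toFinset.filter (fun i => g ∈ Fam i)).card : ℝ)) := by
    have h1 : (U.ncard * s : ℕ)
        ≤ ∑ i ∈ hU.toFinset, ((hF.toFinset.filter (fun g => g ∈ Fam i)).card) := by
      have hcard : U.ncard = hU.toFinset.card := (Set.ncard_eq_toFinset_card _ hU)
      rw [hcard]
      calc hU.toFinset.card * s = ∑ _i ∈ hU.toFinset, s := by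
            rw [Finset.sum_const, smul_eq_mul, mul_comm]
        _ ≤ ∑ i ∈ hU.toFinset, ((hF.toFinset.filter (fun g => g ∈ Fam i)).card) := by
            apply Finset.sum_le_sum
            intro i hi
            have hiU : i ∈ U := (Set.Finite.mem_toFinset hU).mp hi
            have := hsize i hiU
            rwa [ncard_sep_eq_filter hF (fun f => f ∈ Fam i)] at this
    rw [← hswap] at h1
    have h2 : ((U.ncard * s : ℕ) : ℝ)
        ≤ ((∑ g ∈ hF.toFinset, ((hU.toFinset.filter (fun i => g ∈ Fam i)).card) : ℕ) : ℝ) := by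
      exact_mod_cast h1
    push_cast at h2
    linarith
  have hsum : ∑ _g ∈ hF.toFinset, ((s : ℝ) * U.ncard / F.ncard)
      ≤ ∑ g ∈ hF.toFinset, (((hU.toFinset.filter (fun i => g ∈ Fam i)).card : ℝ)) := by
    rw [Finset.sum_const, nsmul_eq_mul]
    have hFcard : (hF.toFinset.card : ℝ) = (F.ncard : ℝ) := by
      rw [Set.ncard_eq_toFinset_card _ hF]
    rw [hFcard]
    rw [mul_div_assoc']
    rw [mul_comm (F.ncard : ℝ) _, mul_div_assoc, div_self hFpos.ne', mul_one]
    exact hlow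
  obtain ⟨g, hgT, hg⟩ := Finset.exists_le_of_sum_le hTne hsum
  refine ⟨g, (Set.Finite.mem_toFinset hF).mp hgT, ?_⟩
  rwa [ncard_sep_eq_filter hU (fun i => g ∈ Fam i)]

open Classical in
lemma exists_hitter {ι V : Type*} (H : Set V) (hH : H.Finite) (hHne : H.Nonempty)
    (Fam : ι → Set V) (U : Set ι) (hU : U.Finite)
    (hhit : ∀ i ∈ U, ∃ h ∈ H, h ∈ Fam i) :
    ∃ g ∈ H, (U.ncard : ℝ) / H.ncard ≤ ({i ∈ U | g ∈ Fam i}.ncard : ℝ) := by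
  have hHpos : 0 < (H.ncard : ℝ) := by
    have := (Set.ncard_pos hH).mpr hHne
    exact_mod_cast this
  have hTne : hH.toFinset.Nonempty := by rwa [Set.Finite.toFinset_nonempty]
  have hsub : hU.toFinset ⊆ hH.toFinset.biUnion
      (fun h => hU.toFinset.filter (fun i => h ∈ Fam i)) := by
    intro i hi
    have hiU : i ∈ U := (Set.Finite.mem_toFinset hU).mp hi
    obtain ⟨h, hhH, hmem⟩ := hhit i hiU
    exact Finset.mem_biUnion.mpr ⟨h, (Set.Finite.mem_toFinset hH).mpr hhH,
      Finset.mem_filter.mpr ⟨hi, hmem⟩⟩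
  have hlow : U.ncard ≤ ∑ h ∈ hH.toFinset, (hU.toFinset.filter (fun i => h ∈ Fam i)).card := by
    calc U.ncard = hU.toFinset.card := Set.ncard_eq_toFinset_card _ hU
      _ ≤ (hH.toFinset.biUnion (fun h => hU.toFinset.filter (fun i => h ∈ Fam i))).card :=
          Finset.card_le_card hsub
      _ ≤ _ := Finset.card_biUnion_le
  have hsum : ∑ _g ∈ hH.toFinset, ((U.ncard : ℝ) / H.ncard)
      ≤ ∑ g ∈ hH.toFinset, (((hU.toFinset.filter (fun i => g ∈ Fam i)).card : ℝ)) := by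
    rw [Finset.sum_const, nsmul_eq_mul]
    have hHcard : (hH.toFinset.card : ℝ) = (H.ncard : ℝ) := by
      rw [Set.ncard_eq_toFinset_card _ hH]
    rw [hHcard, mul_div_assoc', mul_comm (H.ncard : ℝ) _, mul_div_assoc,
      div_self hHpos.ne', mul_one]
    exact_mod_cast hlow
  obtain ⟨g, hgT, hg⟩ := Finset.exists_le_of_sum_le hTne hsum
  refine ⟨g, (Set.Finite.mem_toFinset hH).mp hgT, ?_⟩
  rwa [ncard_sep_eq_filter hU (fun i => g ∈ Fam i)]

lemma exp_100_247_le : Real.exp ((100:ℝ)/247) ≤ 3/2 := by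
  have h1 : Real.exp 1 < 2.7182818286 := Real.exp_one_lt_d9
  have h100 : Real.exp (100 : ℝ) ≤ (2.7182818286:ℝ) ^ (100:ℕ) := by
    have : Real.exp ((100:ℕ) * (1:ℝ)) = Real.exp 1 ^ (100:ℕ) := Real.exp_nat_mul 1 100
    rw [show (100:ℝ) = ((100:ℕ) : ℝ) * 1 by norm_num, this]
    exact pow_le_pow_left₀ (Real.exp_pos 1).le h1.le 100
  have h2 : (2.7182818286:ℝ) ^ (100:ℕ) ≤ (3/2:ℝ) ^ (247:ℕ) := by norm_num
  have h3 : Real.exp ((100:ℝ)/247) ^ (247:ℕ) = Real.exp 100 := by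
    rw [← Real.exp_nat_mul]
    norm_num
  have h4 : Real.exp ((100:ℝ)/247) ^ (247:ℕ) ≤ (3/2:ℝ) ^ (247:ℕ) := by
    rw [h3]; linarith
  exact le_of_pow_le_pow_left₀ (by norm_num) (by norm_num) h4

/-- Let `1 ≤ t ≤ |F|` with `t ≥ |F|/3`, suppose there is at least
one `t`-good customer, and let `X` and `Y` be the greedy hitting sets generated by one
run of `DHS_t`. Then `|X| ≤ 1 + 2.47·ln|C_t|` and
`|X ∪ Y| ≤ (3.47·ln|C_t| + 2)·OPT_t`, where `OPT_t` is the minimum size of a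
setwise-disjoint cover of the set `C_t` of `t`-good customers. -/
theorem dhs_performance_bound_large_t
    {V : Type*} [Fintype V] (A : V → V → Prop) (w : V → V → ℝ)
    (hw : ∀ x y, A x y → 0 < w x y) (hirr : ∀ v, ¬ A v v)
    (hconn : ∀ u v : V, ∃ p, IsDiPath A u v p)
    (C F : Set V) (hCF : C ⊆ F)
    (t : ℕ) (ht : 1 ≤ t) (htF : t ≤ F.ncard)
    (ht3 : (F.ncard : ℝ) ≤ 3 * (t : ℝ))
    (hCt : (tGoodCustomers A w C F t).Nonempty)
    (X : Set V)
    (hX : IsGreedyHittingSet F (Sgood A w F) (tGoodCustomers A w C F t) X)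
    (C'' : Set V)
    (hC'' : C'' = {c ∈ tGoodCustomers A w C F t | ¬ CoveredBy A w X c})
    (fc xc : V → V)
    (hfc : ∀ c ∈ C'', fc c ∈ X ∩ Sgood A w F c)
    (hxc : ∀ c ∈ C'', spNbrs A w c (fc c) = {xc c})
    (Y : Set V)
    (hY : IsGreedyHittingSet F (fun c => Favoid A w F (xc c) c) C'' Y) :
    (X.ncard : ℝ) ≤ 1 + 2.47 * Real.log ((tGoodCustomers A w C F t).ncard : ℝ) ∧
    ((X ∪ Y).ncard : ℝ) ≤
      (3.47 * Real.log ((tGoodCustomers A w C F t).ncard : ℝ) + 2) *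
        ((sInf {n | ∃ F', IsSetwiseCover A w (tGoodCustomers A w C F t) F F' ∧
            F'.ncard = n} : ℕ) : ℝ) := by
  classical
  set Ct := tGoodCustomers A w C F t with hCtdef
  have hCtfin : Ct.Finite := Set.toFinite _
  have hFfin : F.Finite := Set.toFinite _
  have hCtF : Ct ⊆ F := fun c hc => hCF hc.1
  have hm1 : (1:ℝ) ≤ (Ct.ncard : ℝ) := by
    exact_mod_cast (Set.ncard_pos hCtfin).mpr hCt
  have hlogm : (0:ℝ) ≤ Real.log (Ct.ncard : ℝ) := Real.log_nonneg hm1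
  obtain ⟨c₀, hc₀⟩ := hCt
  have hFne : F.Nonempty := ⟨c₀, hCtF hc₀⟩
  have hFpos : (0:ℝ) < (F.ncard : ℝ) := by
    exact_mod_cast (Set.ncard_pos hFfin).mpr hFne
  -- step lemma for X
  have hstepX : ∀ U : Set V, U ⊆ Ct → U.Nonempty →
      ∃ g ∈ F, (1 - 2/3 : ℝ) * (U.ncard : ℝ) ≤
        ({i ∈ U | g ∈ Sgood A w F i}.ncard : ℝ) := by
    intro U hUsub hUne
    have hUfin : U.Finite := Set.toFinite _
    have hsize : ∀ i ∈ U, t + 1 ≤ {f ∈ F | f ∈ Sgood A w F i}.ncard := by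
      intro i hi
      have hiCt : i ∈ Ct := hUsub hi
      have hiG : i ∉ {f | GoodFor A w F i f} := fun hf => hf.2.1 rfl
      have hSF : Sgood A w F i ⊆ {f ∈ F | f ∈ Sgood A w F i} := by
        intro f hf
        refine ⟨?_, hf⟩
        rcases hf with hf | hf
        · rw [Set.mem_singleton_iff] at hf; rw [hf]; exact hCtF hiCt
        · exact hf.1
      have hScard : t + 1 ≤ (Sgood A w F i).ncard := by
        have he : Sgood A w F i = insert i {f | GoodFor A w F i f} := by
          rw [Sgood, Set.singleton_union]
        rw [he, Set.ncard_insert_of_notMem hiG (Set.toFinite _)]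
        have ht' : t ≤ {f | GoodFor A w F i f}.ncard := hiCt.2
        omega
      exact le_trans hScard (Set.ncard_le_ncard hSF (Set.toFinite _))
    obtain ⟨g, hgF, hg⟩ := exists_avg_elt F hFfin hFne (Sgood A w F) U hUfin (t+1) hsize
    refine ⟨g, hgF, le_trans ?_ hg⟩
    rw [le_div_iff₀ hFpos]
    have hU0 : (0:ℝ) ≤ (U.ncard : ℝ) := Nat.cast_nonneg _
    push_cast
    nlinarith [mul_nonneg hU0 (by linarith : (0:ℝ) ≤ 3 * (t:ℝ) - (F.ncard : ℝ))]
  have hXexp : (2/3 : ℝ) ≤ Real.exp (-(100/247)) := by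
    rw [Real.exp_neg, show (2/3:ℝ) = ((3:ℝ)/2)⁻¹ by norm_num]
    exact inv_anti₀ (Real.exp_pos _) exp_100_247_le
  have hXbound : (X.ncard : ℝ) ≤ 1 + 2.47 * Real.log (Ct.ncard : ℝ) := by
    rcases greedy_card_bound F (Sgood A w F) Ct hCtfin (2/3) (100/247) (by norm_num)
        (by norm_num) hXexp hstepX X hX with hXe | ⟨-, hXb⟩
    · exfalso
      obtain ⟨l, -, -, hunhit⟩ := hX
      rw [hXe] at hunhit
      have hCte : Ct = ∅ := by
        rw [← hunhit]; ext i; simp [unhitSets]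
      exact absurd (hCte ▸ hc₀) (Set.notMem_empty c₀)
    have h247 : Real.log (Ct.ncard : ℝ) / ((100:ℝ)/247)
        = 2.47 * Real.log (Ct.ncard : ℝ) := by
      rw [div_div_eq_mul_div]
      norm_num
      ring
    rw [h247] at hXb
    linarith
  refine ⟨hXbound, ?_⟩
  -- the optimum
  set S := {n | ∃ F', IsSetwiseCover A w Ct F F' ∧ F'.ncard = n} with hSdef
  have hSne : S.Nonempty :=
    ⟨F.ncard, F, ⟨subset_rfl, fun c hc hcF => absurd (hCtF hc) hcF⟩, rfl⟩
  obtain ⟨Fstar, hcover, hKcard⟩ := Nat.sInf_mem hSne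
  set K := sInf S with hKdef
  have hFstarfin : Fstar.Finite := hFfin.subset hcover.1
  have hK1 : 1 ≤ K := by
    by_contra hK0
    have hK0' : K = 0 := by omega
    have hFstarE : Fstar = ∅ := by
      rw [← Set.ncard_eq_zero hFstarfin, hKcard, hK0']
    have hc₀F : c₀ ∉ Fstar := by rw [hFstarE]; exact Set.notMem_empty c₀
    obtain ⟨f₁, hf₁, -⟩ := hcover.2 c₀ hc₀ hc₀F
    rw [hFstarE] at hf₁
    exact Set.notMem_empty f₁ hf₁
  have hKR : (1:ℝ) ≤ (K : ℝ) := by exact_mod_cast hK1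
  have hKpos : (0:ℝ) < (K : ℝ) := lt_of_lt_of_le one_pos hKR
  have hFstarne : Fstar.Nonempty := by
    rw [← Set.ncard_pos hFstarfin, hKcard]
    omega
  -- C'' facts
  have hC''sub : C'' ⊆ Ct := by rw [hC'']; exact fun c hc => hc.1
  have hC''fin : C''.Finite := hCtfin.subset hC''sub
  -- the structural hitting property
  have hhitC'' : ∀ c ∈ C'', ∃ h ∈ Fstar, h ∈ Favoid A w F (xc c) c := by
    intro c hc
    have hcCt : c ∈ Ct := hC''sub hc
    have hAx : A c (xc c) := by
      have hx : xc c ∈ spNbrs A w c (fc c) := by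
        rw [hxc c hc]; exact rfl
      exact hx.1
    have hxc_ne : xc c ≠ c := by
      intro h; rw [h] at hAx; exact hirr c hAx
    by_cases hcF : c ∈ Fstar
    · exact ⟨c, hcF, Or.inl rfl⟩
    · obtain ⟨f₁, hf₁, f₂, hf₂, hne, hne1, hne2, hcov⟩ := hcover.2 c hcCt hcF
      by_cases h1 : ∀ p, IsShortestDiPath A w c f₁ p → xc c ∉ p
      · exact ⟨f₁, hf₁, Or.inr ⟨hcover.1 hf₁, hne1, h1⟩⟩
      · push_neg at h1
        obtain ⟨p₁, hp₁, hxp₁⟩ := h1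
        refine ⟨f₂, hf₂, Or.inr ⟨hcover.1 hf₂, hne2, fun p hp hxp => ?_⟩⟩
        exact hxc_ne (hcov p₁ p hp₁ hp (xc c) hxp₁ hxp)
  -- step lemma for Y
  have hstepY : ∀ U : Set V, U ⊆ C'' → U.Nonempty →
      ∃ g ∈ F, (1 - (1 - 1/(K:ℝ))) * (U.ncard : ℝ) ≤
        ({i ∈ U | g ∈ Favoid A w F (xc i) i}.ncard : ℝ) := by
    intro U hUsub hUne
    have hUfin : U.Finite := Set.toFinite _
    obtain ⟨g, hgH, hg⟩ := exists_hitter Fstar hFstarfin hFstarne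
      (fun i => Favoid A w F (xc i) i) U hUfin (fun i hi => hhitC'' i (hUsub hi))
    refine ⟨g, hcover.1 hgH, ?_⟩
    rw [hKcard] at hg
    have heq : (1 - (1 - 1/(K:ℝ))) * (U.ncard : ℝ) = (U.ncard : ℝ) / (K:ℝ) := by
      field_simp
      ring
    rw [heq]
    exact hg
  have hYexp : (1 - 1/(K:ℝ)) ≤ Real.exp (-(1/(K:ℝ))) := by
    have := Real.add_one_le_exp (-(1/(K:ℝ)))
    linarith
  have hρ0 : (0:ℝ) ≤ 1 - 1/(K:ℝ) := by
    have : 1/(K:ℝ) ≤ 1 := by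
      rw [div_le_one hKpos]; exact hKR
    linarith
  have hYbound : (Y.ncard : ℝ) ≤ (K:ℝ) * Real.log (Ct.ncard : ℝ) + (K:ℝ) := by
    rcases greedy_card_bound F (fun c => Favoid A w F (xc c) c) C'' hC''fin
        (1 - 1/(K:ℝ)) (1/(K:ℝ)) hρ0 (by positivity) hYexp hstepY Y hY with hYe | ⟨hC''1, hYb⟩
    · rw [hYe]
      simp only [Set.ncard_empty, Nat.cast_zero]
      nlinarith
    · have hdiv : Real.log (C''.ncard:ℝ) / (1/(K:ℝ)) = Real.log (C''.ncard:ℝ) * (K:ℝ) := by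
        field_simp
      rw [hdiv] at hYb
      have hlogC'' : Real.log (C''.ncard : ℝ) ≤ Real.log (Ct.ncard : ℝ) := by
        have hle : (C''.ncard : ℝ) ≤ (Ct.ncard : ℝ) := by
          exact_mod_cast Set.ncard_le_ncard hC''sub hCtfin
        exact Real.log_le_log (by linarith) hle
      nlinarith
  -- combine
  have hunion : ((X ∪ Y).ncard : ℝ) ≤ (X.ncard : ℝ) + (Y.ncard : ℝ) := by
    exact_mod_cast Set.ncard_union_le X Y
  have hgoal : (X.ncard : ℝ) + (Y.ncard : ℝ)
      ≤ (3.47 * Real.log (Ct.ncard : ℝ) + 2) * (K:ℝ) := by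
    nlinarith [mul_nonneg hlogm (by linarith : (0:ℝ) ≤ (K:ℝ) - 1)]
  calc ((X ∪ Y).ncard : ℝ) ≤ (X.ncard : ℝ) + (Y.ncard : ℝ) := hunion
    _ ≤ (3.47 * Real.log (Ct.ncard : ℝ) + 2) * (K:ℝ) := hgoal
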